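/- Let n ≥ 1 be an integer and ω : ℝ → ℂ a continuous 2π-periodic function. Then ∫₀^{2π} ω(α) · (|z|² + 1 − conj(z)·e^{iα} − z·e^{−iα})^{n−1} dα = 0 for every z in the open unit disk if and only if ∫₀^{2π} ω(α) e^{−imα} dα = 0 for every integer m with |m| ≤ n−1. (This is the characterization of the kernel of the Poisson–Helgason transform 𝒫_{−n}: its kernel consists exactly of the ω whose Fourier coefficients of order at most n−1 all vanish.) -/

import Mathlib

open Complex Real Finset

open Complex Real

/-- The `m`-th Fourier coefficient `ω̂(m) = ∫₀^{2π} ω(α) e^{−imα} dα`. -/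
noncomputable def fourierCoeffInt (ω : ℝ → ℂ) (m : ℤ) : ℂ :=
  ∫ α in (0 : ℝ)..(2 * Real.pi), ω α * Complex.exp (-(m : ℂ) * α * Complex.I)

/-- The integral `∫₀^{2π} ω(α) (|z|² + 1 − conj z·e^{iα} − z·e^{−iα})^{n−1} dα`, i.e.
`(1−|z|²)^{n−1} 𝒫_{−n}(ω)(z)`. -/
noncomputable def poissonInt (n : ℕ) (ω : ℝ → ℂ) (z : ℂ) : ℂ :=
  ∫ α in (0 : ℝ)..(2 * Real.pi),
    ω α * (((‖z‖ ^ 2 : ℝ) : ℂ) + 1 - (starRingEnd ℂ) z * Complex.exp (α * Complex.I)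
            - z * Complex.exp (-(α * Complex.I))) ^ (n - 1)


private lemma kernel_expand (N : ℕ) (z : ℂ) (α : ℝ) :
    (((‖z‖ ^ 2 : ℝ) : ℂ) + 1 - (starRingEnd ℂ) z * Complex.exp (α * Complex.I)
        - z * Complex.exp (-(α * Complex.I))) ^ N
    = ∑ j ∈ range (N + 1), ∑ k ∈ range (N + 1),
        ((N.choose j : ℂ) * (N.choose k : ℂ) * (-1) ^ (j + k) * z ^ j
            * ((starRingEnd ℂ) z) ^ k)
          * Complex.exp (-((((j : ℤ) - (k : ℤ)) : ℤ) : ℂ) * α * Complex.I) := by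
  have h0 : (((‖z‖ ^ 2 : ℝ) : ℂ)) = z * (starRingEnd ℂ) z := by
    rw [Complex.mul_conj]
    norm_cast
    rw [Complex.normSq_eq_norm_sq]
  have hE : Complex.exp ((α : ℂ) * Complex.I) ≠ 0 := Complex.exp_ne_zero _
  have hfac : ((‖z‖ ^ 2 : ℝ) : ℂ) + 1 - (starRingEnd ℂ) z * Complex.exp (α * Complex.I)
      - z * Complex.exp (-(α * Complex.I))
      = (1 - z * Complex.exp (-(α * Complex.I)))
        * (1 - (starRingEnd ℂ) z * Complex.exp (α * Complex.I)) := by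
    rw [h0, Complex.exp_neg]
    field_simp
    ring
  rw [hfac, mul_pow,
    show (1 : ℂ) - z * Complex.exp (-(α * Complex.I))
        = -(z * Complex.exp (-(α * Complex.I))) + 1 by ring,
    show (1 : ℂ) - (starRingEnd ℂ) z * Complex.exp (α * Complex.I)
        = -((starRingEnd ℂ) z * Complex.exp (α * Complex.I)) + 1 by ring,
    add_pow, add_pow, Finset.sum_mul_sum]
  refine Finset.sum_congr rfl fun j hj => Finset.sum_congr rfl fun k hk => ?_
  simp only [one_pow, mul_one]
  have key : Complex.exp (-((α : ℂ) * Complex.I)) ^ j * Complex.exp ((α : ℂ) * Complex.I) ^ k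
      = Complex.exp (-((((j : ℤ) - (k : ℤ)) : ℤ) : ℂ) * α * Complex.I) := by
    rw [← Complex.exp_nat_mul, ← Complex.exp_nat_mul, ← Complex.exp_add]
    congr 1
    push_cast
    ring
  have step : (-(z * Complex.exp (-((α : ℂ) * Complex.I)))) ^ j * (N.choose j : ℂ)
      * ((-((starRingEnd ℂ) z * Complex.exp ((α : ℂ) * Complex.I))) ^ k * (N.choose k : ℂ))
      = ((N.choose j : ℂ) * (N.choose k : ℂ) * (-1) ^ (j + k) * z ^ j
          * ((starRingEnd ℂ) z) ^ k)
        * (Complex.exp (-((α : ℂ) * Complex.I)) ^ j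
            * Complex.exp ((α : ℂ) * Complex.I) ^ k) := by
    rw [neg_pow (z * Complex.exp (-((α : ℂ) * Complex.I))),
      neg_pow ((starRingEnd ℂ) z * Complex.exp ((α : ℂ) * Complex.I)), mul_pow, mul_pow,
      pow_add]
    ring
  rw [step, key]

private lemma poissonInt_eq_sum (n : ℕ) (hn : 1 ≤ n) (ω : ℝ → ℂ) (hcont : Continuous ω)
    (z : ℂ) :
    poissonInt n ω z = ∑ j ∈ range n, ∑ k ∈ range n,
      ((n - 1).choose j : ℂ) * ((n - 1).choose k : ℂ) * (-1) ^ (j + k) * z ^ j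
        * ((starRingEnd ℂ) z) ^ k * fourierCoeffInt ω ((j : ℤ) - (k : ℤ)) := by
  obtain ⟨N, rfl⟩ : ∃ N, n = N + 1 := ⟨n - 1, by omega⟩
  simp only [Nat.add_sub_cancel]
  unfold poissonInt
  simp only [Nat.add_sub_cancel]
  have hint : ∀ (j k : ℕ), IntervalIntegrable
      (fun α : ℝ => ((N.choose j : ℂ) * (N.choose k : ℂ) * (-1) ^ (j + k) * z ^ j
          * ((starRingEnd ℂ) z) ^ k)
        * (ω α * Complex.exp (-((((j : ℤ) - (k : ℤ)) : ℤ) : ℂ) * α * Complex.I)))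
      MeasureTheory.volume 0 (2 * Real.pi) := by
    intro j k
    apply Continuous.intervalIntegrable
    fun_prop
  have hint2 : ∀ j : ℕ, IntervalIntegrable
      (fun α : ℝ => ∑ k ∈ range (N + 1),
        ((N.choose j : ℂ) * (N.choose k : ℂ) * (-1) ^ (j + k) * z ^ j
            * ((starRingEnd ℂ) z) ^ k)
          * (ω α * Complex.exp (-((((j : ℤ) - (k : ℤ)) : ℤ) : ℂ) * α * Complex.I)))
      MeasureTheory.volume 0 (2 * Real.pi) := by
    intro j
    apply Continuous.intervalIntegrable
    refine continuous_finset_sum _ fun k _ => ?_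
    fun_prop
  calc (∫ α in (0:ℝ)..(2 * Real.pi),
        ω α * (((‖z‖ ^ 2 : ℝ) : ℂ) + 1 - (starRingEnd ℂ) z * Complex.exp (α * Complex.I)
            - z * Complex.exp (-(α * Complex.I))) ^ N)
      = ∫ α in (0:ℝ)..(2 * Real.pi), ∑ j ∈ range (N + 1), ∑ k ∈ range (N + 1),
          ((N.choose j : ℂ) * (N.choose k : ℂ) * (-1) ^ (j + k) * z ^ j
              * ((starRingEnd ℂ) z) ^ k)
            * (ω α * Complex.exp (-((((j : ℤ) - (k : ℤ)) : ℤ) : ℂ) * α * Complex.I)) := by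
        refine intervalIntegral.integral_congr fun α _ => ?_
        rw [kernel_expand, Finset.mul_sum]
        refine Finset.sum_congr rfl fun j hj => ?_
        rw [Finset.mul_sum]
        refine Finset.sum_congr rfl fun k hk => ?_
        ring
    _ = ∑ j ∈ range (N + 1), ∑ k ∈ range (N + 1),
          ((N.choose j : ℂ) * (N.choose k : ℂ) * (-1) ^ (j + k) * z ^ j
              * ((starRingEnd ℂ) z) ^ k)
            * ∫ α in (0:ℝ)..(2 * Real.pi),
                ω α * Complex.exp (-((((j : ℤ) - (k : ℤ)) : ℤ) : ℂ) * α * Complex.I) := by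
        refine (intervalIntegral.integral_finset_sum (fun j _ => hint2 j)).trans ?_
        refine Finset.sum_congr rfl fun j hj => ?_
        refine (intervalIntegral.integral_finset_sum (fun k _ => hint j k)).trans ?_
        refine Finset.sum_congr rfl fun k hk => ?_
        exact intervalIntegral.integral_const_mul _ _
    _ = _ := by
        unfold fourierCoeffInt
        rfl

private lemma integral_exp_int (t : ℤ) :
    (∫ θ in (0:ℝ)..(2 * Real.pi), Complex.exp ((t : ℂ) * θ * Complex.I))
      = if t = 0 then ((2 * Real.pi : ℝ) : ℂ) else 0 := by
  rcases eq_or_ne t 0 with h | h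
  · simp [h, Complex.ofReal_mul]
  · rw [if_neg h]
    have hc : ((t : ℂ) * Complex.I) ≠ 0 :=
      mul_ne_zero (by exact_mod_cast h) Complex.I_ne_zero
    have hcongr : (∫ θ in (0:ℝ)..(2 * Real.pi), Complex.exp ((t : ℂ) * θ * Complex.I))
        = ∫ θ in (0:ℝ)..(2 * Real.pi), Complex.exp (((t : ℂ) * Complex.I) * θ) := by
      refine intervalIntegral.integral_congr fun θ _ => ?_
      ring_nf
    rw [hcongr, integral_exp_mul_complex hc]
    have h1 : (t : ℂ) * Complex.I * ((2 * Real.pi : ℝ) : ℂ) = (t : ℂ) * (2 * Real.pi * Complex.I) := by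
      push_cast; ring
    rw [h1, Complex.exp_int_mul_two_pi_mul_I]
    simp

private lemma neg_one_pow_fiber {j k : ℕ} {m : ℤ} (h : (j : ℤ) - k = m) :
    ((-1 : ℂ)) ^ (j + k) = (-1 : ℂ) ^ m := by
  have h2 : ((j + k : ℕ) : ℤ) = m + 2 * (k : ℤ) := by push_cast; omega
  calc ((-1 : ℂ)) ^ (j + k) = ((-1 : ℂ)) ^ (((j + k : ℕ)) : ℤ) := (zpow_natCast _ _).symm
    _ = ((-1 : ℂ)) ^ (m + 2 * (k : ℤ)) := by rw [h2]
    _ = (-1 : ℂ) ^ m := by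
        rw [zpow_add₀ (by norm_num : (-1 : ℂ) ≠ 0), zpow_mul]
        norm_num

theorem kernel_poissonHelgason_neg_n (n : ℕ) (hn : 1 ≤ n) (ω : ℝ → ℂ)
    (hcont : Continuous ω) (hper : ∀ α : ℝ, ω (α + 2 * Real.pi) = ω α) :
    (∀ z : ℂ, ‖z‖ < 1 → poissonInt n ω z = 0) ↔
      (∀ m : ℤ, |m| ≤ (n : ℤ) - 1 → fourierCoeffInt ω m = 0) := by
  obtain ⟨N, rfl⟩ : ∃ N, n = N + 1 := ⟨n - 1, by omega⟩
  constructor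
  · intro h m hm
    have hm' : |m| ≤ (N : ℤ) := by push_cast at hm; omega
    obtain ⟨hm1, hm2⟩ := abs_le.1 hm'
    -- Step A: the trigonometric sum vanishes for all θ
    have hA : ∀ θ : ℝ, ∑ j ∈ range (N + 1), ∑ k ∈ range (N + 1),
        (((N.choose j : ℂ) * (N.choose k : ℂ) * (-1) ^ (j + k) * (1/2 : ℂ) ^ (j + k))
          * fourierCoeffInt ω ((j : ℤ) - (k : ℤ)))
          * Complex.exp (((((j : ℤ) - (k : ℤ)) : ℤ) : ℂ) * θ * Complex.I) = 0 := by
      intro θ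
      have hz : ‖(1/2 : ℂ) * Complex.exp (θ * Complex.I)‖ < 1 := by
        rw [norm_mul, Complex.norm_exp_ofReal_mul_I]
        norm_num
      have h0 := h _ hz
      rw [poissonInt_eq_sum (N + 1) (by omega) ω hcont] at h0
      simp only [Nat.add_sub_cancel] at h0
      rw [← h0]
      refine Finset.sum_congr rfl fun j hj => Finset.sum_congr rfl fun k hk => ?_
      have hconj : (starRingEnd ℂ) ((1/2 : ℂ) * Complex.exp (θ * Complex.I))
          = (1/2 : ℂ) * Complex.exp (-((θ : ℂ) * Complex.I)) := by
        rw [map_mul, ← Complex.exp_conj]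
        have h2 : (starRingEnd ℂ) ((θ : ℂ) * Complex.I) = -((θ : ℂ) * Complex.I) := by
          simp [Complex.conj_I]
        rw [h2, map_div₀, map_one, map_ofNat]
      have key : Complex.exp ((θ : ℂ) * Complex.I) ^ j
            * Complex.exp (-((θ : ℂ) * Complex.I)) ^ k
          = Complex.exp (((((j : ℤ) - (k : ℤ)) : ℤ) : ℂ) * θ * Complex.I) := by
        rw [← Complex.exp_nat_mul, ← Complex.exp_nat_mul, ← Complex.exp_add]
        congr 1
        push_cast
        ring
      rw [hconj, mul_pow, mul_pow, ← key]
      ring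
    -- Step B: multiply by exp(-imθ)
    have hB : ∀ θ : ℝ, ∑ j ∈ range (N + 1), ∑ k ∈ range (N + 1),
        (((N.choose j : ℂ) * (N.choose k : ℂ) * (-1) ^ (j + k) * (1/2 : ℂ) ^ (j + k))
          * fourierCoeffInt ω ((j : ℤ) - (k : ℤ)))
          * Complex.exp (((((j : ℤ) - (k : ℤ) - m) : ℤ) : ℂ) * θ * Complex.I) = 0 := by
      intro θ
      have := congrArg (· * Complex.exp (-(m : ℂ) * θ * Complex.I)) (hA θ)
      simp only [zero_mul] at this
      rw [← this, Finset.sum_mul]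
      refine Finset.sum_congr rfl fun j hj => ?_
      rw [Finset.sum_mul]
      refine Finset.sum_congr rfl fun k hk => ?_
      have hexp : Complex.exp (((((j : ℤ) - (k : ℤ)) : ℤ) : ℂ) * θ * Complex.I)
          * Complex.exp (-(m : ℂ) * θ * Complex.I)
          = Complex.exp (((((j : ℤ) - (k : ℤ) - m) : ℤ) : ℂ) * θ * Complex.I) := by
        rw [← Complex.exp_add]
        congr 1
        push_cast
        ring
      rw [← hexp]
      ring
    -- Step C: integrate over θ
    have hC : ∑ j ∈ range (N + 1), ∑ k ∈ range (N + 1),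
        (((N.choose j : ℂ) * (N.choose k : ℂ) * (-1) ^ (j + k) * (1/2 : ℂ) ^ (j + k))
          * fourierCoeffInt ω ((j : ℤ) - (k : ℤ)))
          * (if (j : ℤ) - (k : ℤ) - m = 0 then ((2 * Real.pi : ℝ) : ℂ) else 0) = 0 := by
      have hint : ∀ j k : ℕ, IntervalIntegrable
          (fun θ : ℝ => (((N.choose j : ℂ) * (N.choose k : ℂ) * (-1) ^ (j + k)
              * (1/2 : ℂ) ^ (j + k)) * fourierCoeffInt ω ((j : ℤ) - (k : ℤ)))
            * Complex.exp (((((j : ℤ) - (k : ℤ) - m) : ℤ) : ℂ) * θ * Complex.I))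
          MeasureTheory.volume 0 (2 * Real.pi) := by
        intro j k
        apply Continuous.intervalIntegrable
        fun_prop
      have hint2 : ∀ j : ℕ, IntervalIntegrable
          (fun θ : ℝ => ∑ k ∈ range (N + 1),
            (((N.choose j : ℂ) * (N.choose k : ℂ) * (-1) ^ (j + k)
                * (1/2 : ℂ) ^ (j + k)) * fourierCoeffInt ω ((j : ℤ) - (k : ℤ)))
              * Complex.exp (((((j : ℤ) - (k : ℤ) - m) : ℤ) : ℂ) * θ * Complex.I))
          MeasureTheory.volume 0 (2 * Real.pi) := by
        intro j
        apply Continuous.intervalIntegrable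
        refine continuous_finset_sum _ fun k _ => ?_
        fun_prop
      calc ∑ j ∈ range (N + 1), ∑ k ∈ range (N + 1),
            (((N.choose j : ℂ) * (N.choose k : ℂ) * (-1) ^ (j + k) * (1/2 : ℂ) ^ (j + k))
              * fourierCoeffInt ω ((j : ℤ) - (k : ℤ)))
              * (if (j : ℤ) - (k : ℤ) - m = 0 then ((2 * Real.pi : ℝ) : ℂ) else 0)
          = ∑ j ∈ range (N + 1), ∑ k ∈ range (N + 1),
              (((N.choose j : ℂ) * (N.choose k : ℂ) * (-1) ^ (j + k) * (1/2 : ℂ) ^ (j + k))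
                * fourierCoeffInt ω ((j : ℤ) - (k : ℤ)))
                * ∫ θ in (0:ℝ)..(2 * Real.pi),
                    Complex.exp (((((j : ℤ) - (k : ℤ) - m) : ℤ) : ℂ) * θ * Complex.I) := by
            refine Finset.sum_congr rfl fun j hj => Finset.sum_congr rfl fun k hk => ?_
            rw [integral_exp_int]
        _ = ∑ j ∈ range (N + 1), ∫ θ in (0:ℝ)..(2 * Real.pi), ∑ k ∈ range (N + 1),
              (((N.choose j : ℂ) * (N.choose k : ℂ) * (-1) ^ (j + k) * (1/2 : ℂ) ^ (j + k))
                * fourierCoeffInt ω ((j : ℤ) - (k : ℤ)))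
                * Complex.exp (((((j : ℤ) - (k : ℤ) - m) : ℤ) : ℂ) * θ * Complex.I) := by
            refine Finset.sum_congr rfl fun j hj => ?_
            rw [intervalIntegral.integral_finset_sum (fun k _ => hint j k)]
            refine Finset.sum_congr rfl fun k hk => ?_
            rw [intervalIntegral.integral_const_mul]
        _ = ∫ θ in (0:ℝ)..(2 * Real.pi), ∑ j ∈ range (N + 1), ∑ k ∈ range (N + 1),
              (((N.choose j : ℂ) * (N.choose k : ℂ) * (-1) ^ (j + k) * (1/2 : ℂ) ^ (j + k))
                * fourierCoeffInt ω ((j : ℤ) - (k : ℤ)))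
                * Complex.exp (((((j : ℤ) - (k : ℤ) - m) : ℤ) : ℂ) * θ * Complex.I) :=
            (intervalIntegral.integral_finset_sum (fun j _ => hint2 j)).symm
        _ = 0 := by
            rw [intervalIntegral.integral_congr (g := fun _ => (0 : ℂ)) (fun θ _ => hB θ)]
            simp
    -- Step D: rewrite as a positive multiple of the Fourier coefficient
    set S : ℝ := ∑ j ∈ range (N + 1), ∑ k ∈ range (N + 1),
      (if (j : ℤ) - (k : ℤ) = m then
        ((N.choose j : ℝ) * (N.choose k : ℝ) * (1/2 : ℝ) ^ (j + k)) else 0) with hSdef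
    have hD : ((-1 : ℂ) ^ m * fourierCoeffInt ω m * ((2 * Real.pi : ℝ) : ℂ)) * (S : ℂ) = 0 := by
      rw [← hC, hSdef]
      push_cast
      rw [Finset.mul_sum]
      refine Finset.sum_congr rfl fun j hj => ?_
      rw [Finset.mul_sum]
      refine Finset.sum_congr rfl fun k hk => ?_
      by_cases hc : (j : ℤ) - (k : ℤ) = m
      · rw [if_pos hc, if_pos (by omega), hc, neg_one_pow_fiber hc]
        push_cast
        ring
      · rw [if_neg hc, if_neg (by omega)]
        simp
    have hS : 0 < S := by
      rw [hSdef]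
      have hj₀ : m.toNat ∈ range (N + 1) := by
        simp only [Finset.mem_range]
        omega
      have hk₀ : (-m).toNat ∈ range (N + 1) := by
        simp only [Finset.mem_range]
        omega
      refine Finset.sum_pos' (fun j _ => Finset.sum_nonneg fun k _ => ?_) ⟨m.toNat, hj₀, ?_⟩
      · split
        · positivity
        · exact le_rfl
      · refine Finset.sum_pos' (fun k _ => ?_) ⟨(-m).toNat, hk₀, ?_⟩
        · split
          · positivity
          · exact le_rfl
        · rw [if_pos (by omega)]
          have h1 : 0 < (N.choose m.toNat : ℝ) := by
            exact_mod_cast Nat.choose_pos (by omega)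
          have h2 : 0 < (N.choose (-m).toNat : ℝ) := by
            exact_mod_cast Nat.choose_pos (by omega)
          positivity
    have hne : ((-1 : ℂ) ^ m * ((2 * Real.pi : ℝ) : ℂ)) * (S : ℂ) ≠ 0 := by
      refine mul_ne_zero (mul_ne_zero (zpow_ne_zero _ (by norm_num)) ?_) ?_
      · exact_mod_cast mul_ne_zero (two_ne_zero) Real.pi_ne_zero
      · exact_mod_cast ne_of_gt hS
    have : fourierCoeffInt ω m * (((-1 : ℂ) ^ m * ((2 * Real.pi : ℝ) : ℂ)) * (S : ℂ)) = 0 := by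
      rw [← hD]; ring
    exact (mul_eq_zero.1 this).resolve_right hne
  · intro h z hz
    rw [poissonInt_eq_sum (N + 1) (by omega) ω hcont z]
    refine Finset.sum_eq_zero fun j hj => Finset.sum_eq_zero fun k hk => ?_
    simp only [Finset.mem_range] at hj hk
    rw [h ((j : ℤ) - k) (by push_cast; rw [abs_le]; omega)]
    ring
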